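/- Let μ be a Borel probability measure on ℝⁿ all of whose moments are finite (∫‖x‖ᵏ dμ < ∞ for every k), and let ν be a rotational symmetrization of μ, i.e. a Borel probability measure on ℝⁿ that is invariant under every orthogonal transformation and whose pushforward under x ↦ ‖x‖ equals that of μ. Then for every positive integer k, the k-th eccentricity tensor of μ is orthogonal to the k-th moment tensor of ν: in coordinates, ∑_{i : Fin k → Fin n} (Mᵏ_μ(i) − Mᵏ_ν(i)) · Mᵏ_ν(i) = 0, where Mᵏ_μ(i) = ∫ ∏_{j=1}^{k} x_{i(j)} dμ(x). Consequently ∑_i Mᵏ_μ(i)² = ∑_i Mᵏ_ν(i)² + ∑_i (Mᵏ_μ(i) − Mᵏ_ν(i))². -/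

import Mathlib

open MeasureTheory

theorem eccentricity_orthogonality (n : ℕ)
    (μ ν : Measure (EuclideanSpace ℝ (Fin n)))
    [IsProbabilityMeasure μ] [IsProbabilityMeasure ν]
    (hmom : ∀ k : ℕ, Integrable (fun x => ‖x‖ ^ k) μ)
    (hrot : ∀ Q : EuclideanSpace ℝ (Fin n) ≃ₗᵢ[ℝ] EuclideanSpace ℝ (Fin n),
      Measure.map Q ν = ν)
    (hrad : Measure.map (fun x => ‖x‖) μ = Measure.map (fun x => ‖x‖) ν)
    (k : ℕ) (hk : 0 < k) :
    (∑ i : Fin k → Fin n,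
        ((∫ x, ∏ j, x (i j) ∂μ) - ∫ x, ∏ j, x (i j) ∂ν) * ∫ x, ∏ j, x (i j) ∂ν = 0)
    ∧ (∑ i : Fin k → Fin n, (∫ x, ∏ j, x (i j) ∂μ) ^ 2
        = (∑ i : Fin k → Fin n, (∫ x, ∏ j, x (i j) ∂ν) ^ 2)
          + ∑ i : Fin k → Fin n,
              ((∫ x, ∏ j, x (i j) ∂μ) - ∫ x, ∏ j, x (i j) ∂ν) ^ 2) := by
  classical
  set A : (Fin k → Fin n) → ℝ := fun i => ∫ x, ∏ j, x (i j) ∂μ with hA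
  set B : (Fin k → Fin n) → ℝ := fun i => ∫ x, ∏ j, x (i j) ∂ν with hB
  -- trivial case n = 0
  rcases Nat.eq_zero_or_pos n with hn | hn
  · subst hn
    haveI : IsEmpty (Fin k → Fin 0) := ⟨fun f => (f ⟨0, hk⟩).elim0⟩
    simp
  haveI : NeZero n := ⟨hn.ne'⟩
  -- basic measurability and bounds
  have hmeas : ∀ i : Fin k → Fin n,
      Measurable (fun x : EuclideanSpace ℝ (Fin n) => ∏ j, x (i j)) := by
    intro i
    exact Finset.measurable_prod _ fun j _ => (measurable_pi_apply (i j)).comp (WithLp.measurable_ofLp 2 _)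
  have hbound : ∀ (i : Fin k → Fin n) (x : EuclideanSpace ℝ (Fin n)),
      ‖∏ j, x (i j)‖ ≤ ‖(fun x : EuclideanSpace ℝ (Fin n) => ‖x‖ ^ k) x‖ := by
    intro i x
    have hx : ‖(fun x : EuclideanSpace ℝ (Fin n) => ‖x‖ ^ k) x‖ = ‖x‖ ^ k := by
      simp [Real.norm_eq_abs, abs_of_nonneg (pow_nonneg (norm_nonneg x) k)]
    rw [hx, Real.norm_eq_abs, Finset.abs_prod]
    calc (∏ j, |x (i j)|) ≤ ∏ _j : Fin k, ‖x‖ := by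
          refine Finset.prod_le_prod (fun j _ => abs_nonneg _) fun j _ => ?_
          have h := abs_real_inner_le_norm (EuclideanSpace.single (i j) (1:ℝ)) x
          simpa [EuclideanSpace.inner_single_left] using h
      _ = ‖x‖ ^ k := by simp
  have hInt : ∀ (ρ : Measure (EuclideanSpace ℝ (Fin n))),
      Integrable (fun x : EuclideanSpace ℝ (Fin n) => ‖x‖ ^ k) ρ →
      ∀ i : Fin k → Fin n,
      Integrable (fun x : EuclideanSpace ℝ (Fin n) => ∏ j, x (i j)) ρ := by
    intro ρ hρ i
    exact hρ.mono ((hmeas i).aestronglyMeasurable) (Filter.Eventually.of_forall (hbound i))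
  -- ν has finite k-th norm moment, and norm moments agree
  have hnormmeas : Measurable (fun x : EuclideanSpace ℝ (Fin n) => ‖x‖) := measurable_norm
  have hpowmeas : StronglyMeasurable (fun r : ℝ => r ^ k) :=
    (continuous_pow k).stronglyMeasurable
  have hmomν : Integrable (fun x : EuclideanSpace ℝ (Fin n) => ‖x‖ ^ k) ν := by
    have h1 : Integrable (fun r : ℝ => r ^ k)
        (Measure.map (fun x : EuclideanSpace ℝ (Fin n) => ‖x‖) μ) := by
      rw [integrable_map_measure hpowmeas.aestronglyMeasurable hnormmeas.aemeasurable]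
      exact hmom k
    rw [hrad, integrable_map_measure hpowmeas.aestronglyMeasurable hnormmeas.aemeasurable] at h1
    exact h1
  have hmomeq : ∫ x, ‖x‖ ^ k ∂μ = ∫ x, ‖x‖ ^ k ∂ν := by
    have h1 : ∫ x, ‖x‖ ^ k ∂μ
        = ∫ r, r ^ k ∂(Measure.map (fun x : EuclideanSpace ℝ (Fin n) => ‖x‖) μ) :=
      (integral_map hnormmeas.aemeasurable hpowmeas.aestronglyMeasurable).symm
    rw [h1, hrad, integral_map hnormmeas.aemeasurable hpowmeas.aestronglyMeasurable]
  -- rotational invariance: the inner moment depends only on the norm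
  set e0 : EuclideanSpace ℝ (Fin n) := EuclideanSpace.single (0 : Fin n) (1:ℝ) with he0
  have he0n : ‖e0‖ = 1 := by rw [he0, EuclideanSpace.norm_single]; norm_num
  set c : ℝ := ∫ y, (inner ℝ e0 y : ℝ) ^ k ∂ν with hc
  have key : ∀ x : EuclideanSpace ℝ (Fin n),
      (∫ y, (inner ℝ x y : ℝ) ^ k ∂ν) = ‖x‖ ^ k * c := by
    intro x
    have hnorm : ‖‖x‖ • e0‖ = ‖x‖ := by
      rw [norm_smul, he0n]; simp
    set Q : EuclideanSpace ℝ (Fin n) ≃ₗᵢ[ℝ] EuclideanSpace ℝ (Fin n) :=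
      Submodule.reflection (ℝ ∙ ((‖x‖ • e0) - x))ᗮ with hQ
    have hQx : Q (‖x‖ • e0) = x := Submodule.reflection_sub hnorm
    have hcont : Continuous (fun y : EuclideanSpace ℝ (Fin n) => (inner ℝ x y : ℝ) ^ k) :=
      ((continuous_const.inner continuous_id)).pow k
    have hptw : ∀ y : EuclideanSpace ℝ (Fin n),
        (inner ℝ x (Q y) : ℝ) = ‖x‖ * (inner ℝ e0 y : ℝ) := by
      intro y
      conv_lhs => rw [← hQx]
      rw [Q.inner_map_map, real_inner_smul_left]
    calc (∫ y, (inner ℝ x y : ℝ) ^ k ∂ν)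
        = ∫ y, (inner ℝ x y : ℝ) ^ k ∂(Measure.map Q ν) := by rw [hrot Q]
      _ = ∫ y, (inner ℝ x (Q y) : ℝ) ^ k ∂ν := by
          rw [integral_map Q.continuous.measurable.aemeasurable hcont.aestronglyMeasurable]
      _ = ∫ y, (‖x‖ * (inner ℝ e0 y : ℝ)) ^ k ∂ν := by
          exact integral_congr_ae (Filter.Eventually.of_forall fun y => by simp only [hptw])
      _ = ‖x‖ ^ k * c := by
          simp_rw [mul_pow]
          rw [integral_const_mul]
  -- expansion of the inner product power
  have expand : ∀ x y : EuclideanSpace ℝ (Fin n),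
      (∑ i : Fin k → Fin n, (∏ j, x (i j)) * ∏ j, y (i j)) = (inner ℝ x y : ℝ) ^ k := by
    intro x y
    have h1 : (inner ℝ x y : ℝ) = ∑ m, x m * y m := by
      simp [PiLp.inner_apply, mul_comm]
    rw [h1, Fintype.sum_pow]
    refine Finset.sum_congr rfl fun i _ => ?_
    rw [← Finset.prod_mul_distrib]
  -- the main computation
  have main : ∀ (ρ : Measure (EuclideanSpace ℝ (Fin n))),
      Integrable (fun x : EuclideanSpace ℝ (Fin n) => ‖x‖ ^ k) ρ →
      (∑ i : Fin k → Fin n, (∫ x, ∏ j, x (i j) ∂ρ) * B i) = (∫ x, ‖x‖ ^ k ∂ρ) * c := by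
    intro ρ hρ
    have step1 : ∀ i : Fin k → Fin n,
        (∫ x, ∏ j, x (i j) ∂ρ) * B i = ∫ x, (∏ j, x (i j)) * B i ∂ρ :=
      fun i => (integral_mul_const (B i) _).symm
    rw [Finset.sum_congr rfl fun i _ => step1 i,
      ← integral_finset_sum _ (fun i _ => (hInt ρ hρ i).mul_const (B i))]
    have step2 : ∀ x : EuclideanSpace ℝ (Fin n),
        (∑ i : Fin k → Fin n, (∏ j, x (i j)) * B i) = ‖x‖ ^ k * c := by
      intro x
      have h1 : ∀ i : Fin k → Fin n,
          (∏ j, x (i j)) * B i = ∫ y, (∏ j, x (i j)) * ∏ j, y (i j) ∂ν :=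
        fun i => (integral_const_mul _ _).symm
      rw [Finset.sum_congr rfl fun i _ => h1 i,
        ← integral_finset_sum _ (fun i _ => (hInt ν hmomν i).const_mul _)]
      rw [show (fun y : EuclideanSpace ℝ (Fin n) =>
            ∑ i : Fin k → Fin n, (∏ j, x (i j)) * ∏ j, y (i j))
          = fun y : EuclideanSpace ℝ (Fin n) => (inner ℝ x y : ℝ) ^ k
          from funext fun y => expand x y]
      exact key x
    rw [show (fun x : EuclideanSpace ℝ (Fin n) =>
          ∑ i : Fin k → Fin n, (∏ j, x (i j)) * B i)
        = fun x : EuclideanSpace ℝ (Fin n) => ‖x‖ ^ k * c from funext step2]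
    rw [integral_mul_const]
  have hAB : (∑ i : Fin k → Fin n, A i * B i) = (∫ x, ‖x‖ ^ k ∂μ) * c := main μ (hmom k)
  have hBB : (∑ i : Fin k → Fin n, B i * B i) = (∫ x, ‖x‖ ^ k ∂ν) * c := main ν hmomν
  have first : (∑ i : Fin k → Fin n, (A i - B i) * B i) = 0 := by
    simp_rw [sub_mul]
    rw [Finset.sum_sub_distrib, hAB, hBB, hmomeq, sub_self]
  refine ⟨first, ?_⟩
  have h2 : ∀ i : Fin k → Fin n,
      A i ^ 2 = B i ^ 2 + (A i - B i) ^ 2 + 2 * ((A i - B i) * B i) := fun i => by ring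
  rw [Finset.sum_congr rfl fun i _ => h2 i, Finset.sum_add_distrib, Finset.sum_add_distrib,
    ← Finset.mul_sum, first, mul_zero, add_zero]
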